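/- Let X₀ ∈ ℝⁿ \ {0}, X ∈ ℝⁿ \ {0}, Ȳ ∈ ℝⁿ, and suppose |X| + κ|X - Ȳ| = |X₀| + κ|X₀ - Ȳ| with 0 < κ, and let s̄ = |Ȳ − X₀| > 0, x = X/|X|, x₀ = X₀/|X₀|, m̄ = (Ȳ − X₀)/s̄. Then |X₀|(1 − κ x₀·m̄) − |X|(1 − κ x·m̄) = (κ²|X − X₀|² − (|X| − |X₀|)²)/(2κ s̄). -/

import Mathlib

open scoped RealInnerProductSpace

/-- Algebraic identity for the defect `|X₀|(1 - κ⟨x₀,m̄⟩) - |X|(1 - κ⟨x,m̄⟩)` when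
`X` and `X₀` lie on the same Descartes oval with focus `Ybar`. -/
theorem oval_defect_identity {n : ℕ} (κ : ℝ) (hκ : 0 < κ)
    (X₀ X Ybar : EuclideanSpace ℝ (Fin n)) (hX₀ : X₀ ≠ 0) (hX : X ≠ 0)
    (hs : 0 < ‖Ybar - X₀‖)
    (hoval : ‖X‖ + κ * ‖X - Ybar‖ = ‖X₀‖ + κ * ‖X₀ - Ybar‖) :
    ‖X₀‖ * (1 - κ * ⟪(‖X₀‖⁻¹ • X₀ : EuclideanSpace ℝ (Fin n)),
        (‖Ybar - X₀‖⁻¹ • (Ybar - X₀) : EuclideanSpace ℝ (Fin n))⟫) -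
      ‖X‖ * (1 - κ * ⟪(‖X‖⁻¹ • X : EuclideanSpace ℝ (Fin n)),
        (‖Ybar - X₀‖⁻¹ • (Ybar - X₀) : EuclideanSpace ℝ (Fin n))⟫) =
      (κ ^ 2 * ‖X - X₀‖ ^ 2 - (‖X‖ - ‖X₀‖) ^ 2) / (2 * κ * ‖Ybar - X₀‖) := by
  have hX0n : ‖X₀‖ ≠ 0 := norm_ne_zero_iff.mpr hX₀
  have hXn : ‖X‖ ≠ 0 := norm_ne_zero_iff.mpr hX
  have hsn : ‖Ybar - X₀‖ ≠ 0 := hs.ne'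
  have hκn : κ ≠ 0 := hκ.ne'
  have hdiff : ‖X₀ - Ybar‖ = ‖Ybar - X₀‖ := norm_sub_rev _ _
  have hsq : ‖(X - X₀) - (Ybar - X₀)‖ ^ 2
      = ‖X - X₀‖ ^ 2 - 2 * ⟪X - X₀, Ybar - X₀⟫ + ‖Ybar - X₀‖ ^ 2 :=
    norm_sub_sq_real _ _
  have heq : (X - X₀) - (Ybar - X₀) = X - Ybar := by abel
  rw [heq] at hsq
  have hXY : ‖X - Ybar‖ = (‖X₀‖ - ‖X‖) / κ + ‖Ybar - X₀‖ := by
    field_simp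
    linear_combination hoval + κ * hdiff
  have hinner : ⟪X, Ybar - X₀⟫ - ⟪X₀, Ybar - X₀⟫
      = (‖X - X₀‖ ^ 2 + ‖Ybar - X₀‖ ^ 2 - ‖X - Ybar‖ ^ 2) / 2 := by
    rw [← inner_sub_left]
    linarith [hsq]
  rw [real_inner_smul_left, real_inner_smul_left, real_inner_smul_right,
    real_inner_smul_right]
  rw [hXY] at hinner
  field_simp at hinner ⊢
  linear_combination hinner
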